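/- Suppose a sequence of probabilities satisfies sup_{k>0, t≥0} t² P(Z(t)=k) ≤ C₁ < ∞, and uniformly in 0 < k ≤ Ct, t² e^{k/(Bt)} P(Z(t)=k) → 1/B². If φ(t) = o(t) with φ(t) → ∞, then Σ_{1 ≤ k ≤ Bφ(t)} P(Z(t)=k) ~ φ(t)/(B t²) as t → ∞. -/

import Mathlib

open Real Filter

set_option maxHeartbeats 1000000 in
theorem stmt_14 (P : ℝ → ℕ → ℝ) (B C₁ : ℝ) (hB : 0 < B) (hC₁ : 0 < C₁)
    (hnonneg : ∀ t k, 0 ≤ P t k)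
    (hsup : ∀ t ≥ (0:ℝ), ∀ k : ℕ, 0 < k → t ^ 2 * P t k ≤ C₁)
    (hunif : ∀ C > (0:ℝ), ∀ δ > (0:ℝ), ∀ᶠ t in atTop, ∀ k : ℕ, 0 < k → (k : ℝ) ≤ C * t →
      |t ^ 2 * Real.exp ((k : ℝ) / (B * t)) * P t k - 1 / B ^ 2| < δ)
    (φ : ℝ → ℝ) (hφpos : ∀ t, 0 < φ t)
    (hφo : Tendsto (fun t => φ t / t) atTop (nhds 0))
    (hφ : Tendsto φ atTop atTop) :
    Tendsto (fun t => (∑ k ∈ Finset.Icc 1 ⌊B * φ t⌋₊, P t k) * (B * t ^ 2 / φ t))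
      atTop (nhds 1) := by
  rw [Metric.tendsto_nhds]
  intro ε hε
  set ε' := min ε 1 with hε'def
  have hε'pos : 0 < ε' := lt_min hε one_pos
  have hε'le1 : ε' ≤ 1 := min_le_right _ _
  have hε'le : ε' ≤ ε := min_le_left _ _
  have hB2 : 0 < B ^ 2 := by positivity
  set δ := ε' / (4 * B ^ 2) with hδdef
  have hδpos : 0 < δ := by positivity
  have hc : 0 < 1 / B ^ 2 - δ := by
    rw [hδdef, sub_pos, div_lt_div_iff₀ (by positivity) hB2]
    nlinarith
  have h1 := hunif B hB δ hδpos
  have h3 : ∀ᶠ t in atTop, 1 - ε' / 4 < Real.exp (-(φ t / t)) := by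
    have hneg : Tendsto (fun t => -(φ t / t)) atTop (nhds 0) := by
      simpa using hφo.neg
    have hcont : Tendsto (fun t => Real.exp (-(φ t / t))) atTop (nhds 1) := by
      have := (Real.continuous_exp.continuousAt (x := (0:ℝ))).tendsto.comp hneg
      simpa [Function.comp_def] using this
    exact hcont.eventually (eventually_gt_nhds (by linarith))
  have hφlt : ∀ᶠ t in atTop, φ t / t < 1 := hφo.eventually (eventually_lt_nhds one_pos)
  have h4 : ∀ᶠ t in atTop, 4 / ε' ≤ B * φ t :=
    (hφ.const_mul_atTop hB).eventually_ge_atTop _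
  filter_upwards [h1, eventually_ge_atTop (1:ℝ), hφlt, h3, h4] with t hA ht1 hrat hexp hbig
  have ht0 : (0:ℝ) < t := lt_of_lt_of_le one_pos ht1
  have ht2 : (0:ℝ) < t ^ 2 := by positivity
  have hφ0 : 0 < φ t := hφpos t
  have hφt : φ t ≤ t := by
    have := (div_lt_one ht0).mp hrat; linarith
  have hBφ : 0 < B * φ t := by positivity
  set N := ⌊B * φ t⌋₊ with hN
  have hn_le : (N:ℝ) ≤ B * φ t := Nat.floor_le hBφ.le
  have hn_gt : B * φ t < (N:ℝ) + 1 := Nat.lt_floor_add_one _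
  set Ex : ℝ := Real.exp (-(φ t / t)) with hEx
  have hExpos : 0 < Ex := Real.exp_pos _
  -- per-k bounds
  have hkb : ∀ k ∈ Finset.Icc 1 N,
      (1 / B ^ 2 - δ) * Ex / t ^ 2 ≤ P t k ∧ P t k ≤ (1 / B ^ 2 + δ) / t ^ 2 := by
    intro k hk
    simp only [Finset.mem_Icc] at hk
    have hk0 : 0 < k := hk.1
    have hkR : (k:ℝ) ≤ B * φ t := le_trans (Nat.cast_le.mpr hk.2) hn_le
    have hkBt : (k:ℝ) ≤ B * t := le_trans hkR (by nlinarith)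
    have h := hA k hk0 hkBt
    rw [abs_sub_lt_iff] at h
    set E := Real.exp ((k:ℝ) / (B * t)) with hE
    have hE1 : 1 ≤ E := Real.one_le_exp (by positivity)
    have hEpos : 0 < E := lt_of_lt_of_le one_pos hE1
    have hPk := hnonneg t k
    have hkexp : Ex ≤ E⁻¹ := by
      rw [hEx, hE, ← Real.exp_neg, Real.exp_le_exp, neg_le_neg_iff]
      calc (k:ℝ) / (B * t) ≤ (B * φ t) / (B * t) := by gcongr
        _ = φ t / t := mul_div_mul_left _ _ hB.ne'
    constructor
    · have hlow : 1 / B ^ 2 - δ < t ^ 2 * E * P t k := by linarith [h.2]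
      have hkey : (1 / B ^ 2 - δ) * E⁻¹ ≤ t ^ 2 * P t k := by
        have h2 : (1 / B ^ 2 - δ) * E⁻¹ ≤ (t ^ 2 * E * P t k) * E⁻¹ :=
          mul_le_mul_of_nonneg_right hlow.le (by positivity)
        calc (1 / B ^ 2 - δ) * E⁻¹ ≤ (t ^ 2 * E * P t k) * E⁻¹ := h2
          _ = t ^ 2 * P t k * (E * E⁻¹) := by ring
          _ = t ^ 2 * P t k := by rw [mul_inv_cancel₀ hEpos.ne', mul_one]
      rw [div_le_iff₀ ht2]
      calc (1 / B ^ 2 - δ) * Ex ≤ (1 / B ^ 2 - δ) * E⁻¹ := by gcongr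
        _ ≤ t ^ 2 * P t k := hkey
        _ = P t k * t ^ 2 := by ring
    · rw [le_div_iff₀ ht2]
      have : t ^ 2 * P t k ≤ t ^ 2 * E * P t k := by nlinarith
      linarith [h.1]
  have hcard : (Finset.Icc 1 N).card = N := by rw [Nat.card_Icc]; omega
  have hSub : (∑ k ∈ Finset.Icc 1 N, P t k) ≤ (N:ℝ) * ((1 / B ^ 2 + δ) / t ^ 2) := by
    calc (∑ k ∈ Finset.Icc 1 N, P t k)
        ≤ (Finset.Icc 1 N).card • ((1 / B ^ 2 + δ) / t ^ 2) :=
          Finset.sum_le_card_nsmul _ _ _ (fun k hk => (hkb k hk).2)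
      _ = (N:ℝ) * ((1 / B ^ 2 + δ) / t ^ 2) := by rw [hcard, nsmul_eq_mul]
  have hSlb : (N:ℝ) * ((1 / B ^ 2 - δ) * Ex / t ^ 2) ≤ ∑ k ∈ Finset.Icc 1 N, P t k := by
    calc (N:ℝ) * ((1 / B ^ 2 - δ) * Ex / t ^ 2)
        = (Finset.Icc 1 N).card • ((1 / B ^ 2 - δ) * Ex / t ^ 2) := by rw [hcard, nsmul_eq_mul]
      _ ≤ ∑ k ∈ Finset.Icc 1 N, P t k :=
          Finset.card_nsmul_le_sum _ _ _ (fun k hk => (hkb k hk).1)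
  have hm : 0 < B * t ^ 2 / φ t := by positivity
  have hUeq : (N:ℝ) * ((1 / B ^ 2 + δ) / t ^ 2) * (B * t ^ 2 / φ t)
      = ((N:ℝ) / (B * φ t)) * (1 + ε' / 4) := by
    rw [hδdef]; field_simp
  have hLeq : (N:ℝ) * ((1 / B ^ 2 - δ) * Ex / t ^ 2) * (B * t ^ 2 / φ t)
      = ((N:ℝ) / (B * φ t)) * (1 - ε' / 4) * Ex := by
    rw [hδdef]; field_simp
  have hratio1 : (N:ℝ) / (B * φ t) ≤ 1 := (div_le_one hBφ).mpr hn_le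
  have h4' : 4 ≤ ε' * (B * φ t) := by
    rw [div_le_iff₀ hε'pos] at hbig; linarith
  have hratio2 : 1 - ε' / 4 ≤ (N:ℝ) / (B * φ t) := by
    rw [le_div_iff₀ hBφ]; nlinarith
  have hfac : (0:ℝ) ≤ 1 - ε' / 4 := by linarith
  have hFub : (∑ k ∈ Finset.Icc 1 N, P t k) * (B * t ^ 2 / φ t) ≤ 1 + ε' / 4 := by
    calc (∑ k ∈ Finset.Icc 1 N, P t k) * (B * t ^ 2 / φ t)
        ≤ (N:ℝ) * ((1 / B ^ 2 + δ) / t ^ 2) * (B * t ^ 2 / φ t) :=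
          mul_le_mul_of_nonneg_right hSub hm.le
      _ = ((N:ℝ) / (B * φ t)) * (1 + ε' / 4) := hUeq
      _ ≤ 1 * (1 + ε' / 4) := by
          apply mul_le_mul_of_nonneg_right hratio1 (by linarith)
      _ = 1 + ε' / 4 := one_mul _
  have hFlb : (1 - ε' / 4) * (1 - ε' / 4) * (1 - ε' / 4)
      ≤ (∑ k ∈ Finset.Icc 1 N, P t k) * (B * t ^ 2 / φ t) := by
    calc (1 - ε' / 4) * (1 - ε' / 4) * (1 - ε' / 4)
        ≤ ((N:ℝ) / (B * φ t)) * (1 - ε' / 4) * Ex := by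
          have hr0 : (0:ℝ) ≤ (N:ℝ) / (B * φ t) := le_trans hfac hratio2
          nlinarith [mul_le_mul_of_nonneg_right hratio2 hfac, hexp.le]
      _ = (N:ℝ) * ((1 / B ^ 2 - δ) * Ex / t ^ 2) * (B * t ^ 2 / φ t) := hLeq.symm
      _ ≤ (∑ k ∈ Finset.Icc 1 N, P t k) * (B * t ^ 2 / φ t) :=
          mul_le_mul_of_nonneg_right hSlb hm.le
  have hcube : 1 - ε' < (1 - ε' / 4) * (1 - ε' / 4) * (1 - ε' / 4) := by
    nlinarith [mul_pos hε'pos hε'pos, mul_pos (mul_pos hε'pos hε'pos) hε'pos, hε'le1, hε'pos]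
  rw [Real.dist_eq, abs_sub_lt_iff]
  constructor
  · have : ε' / 4 < ε := by linarith
    linarith
  · linarith
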